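/- Let X be a real Banach space, let (x_n) be an L-orthogonal sequence in X, and let U be a selective ultrafilter on ℕ. If u ∈ X** is the limit of the sequence (ι(x_n)) along U in the weak* topology of X** (such a limit exists since the closed unit ball of X** is weak*-compact), then u is an L-orthogonal element of X**. -/

import Mathlib

open NormedSpace

open Filter

lemma ultra_le_atTop (U : Ultrafilter ℕ) (hnp : ∀ n : ℕ, (U : Filter ℕ) ≠ pure n) :
    (U : Filter ℕ) ≤ Filter.atTop := by
  rw [← Nat.cofinite_eq_atTop]
  rcases U.le_cofinite_or_eq_pure with h | ⟨a, ha⟩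
  · exact h
  · exact absurd (by rw [ha]; rfl) (hnp a)

/-- Iterated intervals endpoints. -/
def intervalC (ψ : ℕ → ℕ) : ℕ → ℕ
  | 0 => 0
  | k + 1 => ψ (intervalC ψ k)

/-- Index of the interval containing `n`. -/
noncomputable def intervalIdx (ψ : ℕ → ℕ) (n : ℕ) : ℕ :=
  Nat.findGreatest (fun k => intervalC ψ k ≤ n) n

lemma sel_gap (U : Ultrafilter ℕ)
    (hnp : ∀ n : ℕ, (U : Filter ℕ) ≠ pure n)
    (hsel : ∀ A : ℕ → Set ℕ, (∀ n, (A n).Nonempty) → Pairwise (Function.onFun Disjoint A) →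
      (⋃ n, A n) = Set.univ → (∀ n, A n ∉ U) →
      ∃ B ∈ U, ∀ n, (B ∩ A n).ncard = 1)
    (φ : ℕ → ℕ) :
    ∃ B : Set ℕ, B ∈ U ∧ (∀ m ∈ B, φ 0 ≤ m) ∧
      ∀ m ∈ B, ∀ m' ∈ B, m < m' → φ m ≤ m' := by
  classical
  set ψ : ℕ → ℕ := fun m => (Finset.range (m + 1)).sup φ + m + 1 with hψdef
  have hψ_ge_φ : ∀ j m : ℕ, j ≤ m → φ j ≤ ψ m := by
    intro j m hjm
    have : φ j ≤ (Finset.range (m + 1)).sup φ :=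
      Finset.le_sup (Finset.mem_range.2 (by omega))
    simp only [hψdef]; omega
  have hψ_mono : Monotone ψ := by
    intro a b hab
    have : (Finset.range (a + 1)).sup φ ≤ (Finset.range (b + 1)).sup φ :=
      Finset.sup_mono (Finset.range_subset_range.2 (by omega))
    simp only [hψdef]; omega
  have hψ_gt : ∀ m, m < ψ m := fun m => by simp only [hψdef]; omega
  set c : ℕ → ℕ := intervalC ψ with hcdef
  have hc0 : c 0 = 0 := rfl
  have hcs : ∀ k, c (k + 1) = ψ (c k) := fun k => rfl
  have hc_mono : StrictMono c := strictMono_nat_of_lt_succ fun k => by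
    rw [hcs]; exact hψ_gt (c k)
  set idx : ℕ → ℕ := intervalIdx ψ with hidxdef
  have hidx1 : ∀ n, c (idx n) ≤ n := by
    intro n
    exact Nat.findGreatest_spec (P := fun k => intervalC ψ k ≤ n) (Nat.zero_le n)
      (by show intervalC ψ 0 ≤ n; simp [intervalC])
  have hidx2 : ∀ n, n < c (idx n + 1) := by
    intro n
    by_contra hcon
    push_neg at hcon
    have h1 : idx n + 1 ≤ c (idx n + 1) := StrictMono.le_apply hc_mono
    have h2 : idx n + 1 ≤ n := le_trans h1 hcon
    exact Nat.findGreatest_is_greatest (P := fun k => intervalC ψ k ≤ n)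
      (Nat.lt_succ_self _) h2 hcon
  have hidx_uniq : ∀ n k, c k ≤ n → n < c (k + 1) → k = idx n := by
    intro n k h1 h2
    by_contra hne
    rcases lt_or_gt_of_ne hne with hlt | hgt
    · have h3 : k + 1 ≤ idx n := hlt
      have h4 : c (k + 1) ≤ c (idx n) := hc_mono.monotone h3
      have h5 := hidx1 n
      omega
    · have h3 : idx n + 1 ≤ k := hgt
      have h4 : c (idx n + 1) ≤ c k := hc_mono.monotone h3
      have h5 := hidx2 n
      omega
  set A : ℕ → Set ℕ := fun k => Set.Ico (c k) (c (k + 1)) with hA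
  have hAidx : ∀ n k, n ∈ A k → k = idx n := fun n k h => hidx_uniq n k h.1 h.2
  obtain ⟨B, hBU, hBcard⟩ := hsel A
    (fun k => ⟨c k, le_rfl, hc_mono (Nat.lt_succ_self k)⟩)
    (by
      intro k l hkl
      simp only [Function.onFun, Set.disjoint_left]
      intro n hn hn'
      exact hkl ((hAidx n k hn).trans (hAidx n l hn').symm))
    (by
      ext n
      simp only [Set.mem_iUnion, Set.mem_univ, iff_true]
      exact ⟨idx n, hidx1 n, hidx2 n⟩)
    (by
      intro k hk
      obtain ⟨a, _, hpa⟩ := Ultrafilter.eq_pure_of_finite_mem (Set.finite_Ico _ _) hk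
      exact hnp a (by rw [hpa]; rfl))
  have hone : ∀ m m', m ∈ B → m' ∈ B → idx m = idx m' → m = m' := by
    intro m m' hm hm' hi
    obtain ⟨a, ha⟩ := Set.ncard_eq_one.1 (hBcard (idx m))
    have h1 : m ∈ B ∩ A (idx m) := ⟨hm, hidx1 m, hidx2 m⟩
    have h2 : m' ∈ B ∩ A (idx m) := ⟨hm', by rw [hi]; exact hidx1 m', by rw [hi]; exact hidx2 m'⟩
    rw [ha] at h1 h2
    simp only [Set.mem_singleton_iff] at h1 h2
    omega
  have hsplit : {n | n ∈ B ∧ Even (idx n)} ∈ U ∨ {n | n ∈ B ∧ ¬ Even (idx n)} ∈ U := by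
    rw [← Ultrafilter.union_mem_iff]
    have he : {n | n ∈ B ∧ Even (idx n)} ∪ {n | n ∈ B ∧ ¬ Even (idx n)} = B := by
      ext n
      simp only [Set.mem_union, Set.mem_setOf_eq]
      tauto
    rwa [he]
  have main : ∀ B₁ : Set ℕ, B₁ ∈ U → B₁ ⊆ B →
      (∀ m ∈ B₁, ∀ m' ∈ B₁, (Even (idx m) ↔ Even (idx m'))) →
      ∃ B' : Set ℕ, B' ∈ U ∧ (∀ m ∈ B', φ 0 ≤ m) ∧
        ∀ m ∈ B', ∀ m' ∈ B', m < m' → φ m ≤ m' := by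
    intro B₁ hB₁U hB₁B hpar
    have hgap : ∀ m ∈ B₁, ∀ m' ∈ B₁, m < m' → φ m ≤ m' := by
      intro m hm m' hm' hlt
      have him : idx m < idx m' := by
        rcases lt_trichotomy (idx m) (idx m') with h | h | h
        · exact h
        · exact absurd (hone m m' (hB₁B hm) (hB₁B hm') h) (by omega)
        · have h3 : idx m' + 1 ≤ idx m := h
          have h1 : c (idx m' + 1) ≤ c (idx m) := hc_mono.monotone h3
          have h4 := hidx2 m'
          have h5 := hidx1 m
          omega
      have hne2 : idx m' ≠ idx m + 1 := by
        intro h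
        have h2 := hpar m hm m' hm'
        rw [h, Nat.even_add_one] at h2
        tauto
      have h2 : idx m + 2 ≤ idx m' := by omega
      calc φ m ≤ ψ m := hψ_ge_φ m m le_rfl
        _ ≤ ψ (c (idx m + 1)) := hψ_mono (le_of_lt (hidx2 m))
        _ = c (idx m + 2) := (hcs _).symm
        _ ≤ c (idx m') := hc_mono.monotone h2
        _ ≤ m' := hidx1 m'
    refine ⟨B₁ ∩ {n | φ 0 ≤ n}, ?_, fun m hm => hm.2, fun m hm m' hm' hlt =>
      hgap m hm.1 m' hm'.1 hlt⟩
    exact Filter.inter_mem hB₁U (ultra_le_atTop U hnp (Filter.mem_atTop (φ 0)))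
  rcases hsplit with h | h
  · exact main _ h (fun n hn => hn.1) (fun m hm m' hm' => iff_of_true hm.2 hm'.2)
  · exact main _ h (fun n hn => hn.1) (fun m hm m' hm' => iff_of_false hm.2 hm'.2)


/-- Let `X` be a real Banach space, `(x n)` an `L`-orthogonal sequence in
`X`, and `U` a selective (nonprincipal) ultrafilter on `ℕ`: for every partition of `ℕ` into
nonempty pairwise disjoint sets `(A n)` with `A n ∉ U` for every `n`, there is `B ∈ U`
meeting each `A n` in exactly one point. If `u ∈ X**` is the weak*-limit of `(ι (x n))`
along `U`, then `u` is an `L`-orthogonal element of `X**`. -/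
theorem stmt7 (X : Type) [NormedAddCommGroup X] [NormedSpace ℝ X] [CompleteSpace X]
    (x : ℕ → X) (hx : ∀ n, ‖x n‖ ≤ 1)
    (hL : ∀ z : X, Filter.Tendsto (fun n => ‖z + x n‖) Filter.atTop (nhds (1 + ‖z‖)))
    (U : Ultrafilter ℕ)
    (hnp : ∀ n : ℕ, (U : Filter ℕ) ≠ pure n)
    (hsel : ∀ A : ℕ → Set ℕ, (∀ n, (A n).Nonempty) → Pairwise (Function.onFun Disjoint A) →
      (⋃ n, A n) = Set.univ → (∀ n, A n ∉ U) →
      ∃ B ∈ U, ∀ n, (B ∩ A n).ncard = 1)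
    (u : StrongDual ℝ (StrongDual ℝ X))
    (hu : Filter.Tendsto (fun n => StrongDual.toWeakDual (inclusionInDoubleDual ℝ X (x n)))
      (U : Filter ℕ) (nhds (StrongDual.toWeakDual u))) :
    ‖u‖ = 1 ∧ ∀ z : X, ‖inclusionInDoubleDual ℝ X z + u‖ = 1 + ‖z‖ := by
  classical
  set ι := inclusionInDoubleDual ℝ X with hι
  have heval : ∀ f : StrongDual ℝ X,
      Filter.Tendsto (fun n => f (x n)) (U : Filter ℕ) (nhds (u f)) := by
    intro f
    exact ((WeakDual.eval_continuous f).tendsto (StrongDual.toWeakDual u)).comp hu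
  have hu_norm : ‖u‖ ≤ 1 := by
    refine ContinuousLinearMap.opNorm_le_bound u zero_le_one (fun f => ?_)
    rw [one_mul]
    have h2 : Filter.Tendsto (fun n => ‖f (x n)‖) (U : Filter ℕ) (nhds ‖u f‖) :=
      (continuous_norm.tendsto _).comp (heval f)
    refine le_of_tendsto h2 (Filter.Eventually.of_forall (fun n => ?_))
    calc ‖f (x n)‖ ≤ ‖f‖ * ‖x n‖ := f.le_opNorm _
      _ ≤ ‖f‖ * 1 := mul_le_mul_of_nonneg_left (hx n) (norm_nonneg f)
      _ = ‖f‖ := mul_one _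
  have hmain : ∀ z : X, ‖ι z + u‖ = 1 + ‖z‖ := by
    intro z
    have hupper : ‖ι z + u‖ ≤ 1 + ‖z‖ := by
      calc ‖ι z + u‖ ≤ ‖ι z‖ + ‖u‖ := norm_add_le (ι z) u
        _ ≤ ‖z‖ + 1 := add_le_add (double_dual_bound ℝ X z) hu_norm
        _ = 1 + ‖z‖ := by ring
    have hlower : ∀ δ : ℝ, 0 < δ → δ < 1 → 1 + ‖z‖ - 2*δ ≤ ‖ι z + u‖ := by
      intro δ hδ0 hδ1
      have hNex : ∀ F : Finset ℕ, ∃ N : ℕ, ∀ j ≥ N,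
          1 + ‖z + ∑ n ∈ F, x n‖ - δ * (1/2)^(F.card+1) ≤ ‖(z + ∑ n ∈ F, x n) + x j‖ := by
        intro F
        refine Filter.eventually_atTop.mp ((hL (z + ∑ n ∈ F, x n)).eventually_const_le ?_)
        have : (0:ℝ) < δ * (1/2)^(F.card+1) := by positivity
        linarith
      choose N hN using hNex
      set φ : ℕ → ℕ := fun m => (Finset.range (m+1)).powerset.sup N with hφ
      have hφ_ge : ∀ (m : ℕ) (F : Finset ℕ), (∀ j ∈ F, j ≤ m) → N F ≤ φ m := by
        intro m F hF
        exact Finset.le_sup (Finset.mem_powerset.2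
          (fun j hj => Finset.mem_range.2 (by have := hF j hj; omega)))
      obtain ⟨B, hBU, hB0, hBgap⟩ := sel_gap U hnp hsel φ
      have hBinf : B.Infinite := by
        intro hfin
        obtain ⟨a, _, hpa⟩ := Ultrafilter.eq_pure_of_finite_mem hfin hBU
        exact hnp a (by rw [hpa]; rfl)
      set b : ℕ → ℕ := Nat.nth (· ∈ B) with hb
      have hbsetOf : {n | n ∈ B}.Infinite := hBinf
      have hbmem : ∀ k, b k ∈ B := fun k => Nat.nth_mem_of_infinite hbsetOf k
      have hbmono : StrictMono b := Nat.nth_strictMono hbsetOf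
      have hinv : ∀ c : ℕ,
          ‖z‖ + c - δ * (1 - (1/2)^c) ≤ ‖z + ∑ i ∈ Finset.range c, x (b i)‖ := by
        intro c
        induction c with
        | zero => simp
        | succ c ih =>
          have hbc : N ((Finset.range c).image b) ≤ b c := by
            rcases Nat.eq_zero_or_pos c with hc0 | hcpos
            · subst hc0
              simp only [Finset.range_zero, Finset.image_empty]
              exact le_trans (hφ_ge 0 ∅ (by simp)) (hB0 _ (hbmem 0))
            · have h1 : N ((Finset.range c).image b) ≤ φ (b (c-1)) := by
                apply hφ_ge
                intro j hj
                simp only [Finset.mem_image, Finset.mem_range] at hj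
                obtain ⟨i, hi, rfl⟩ := hj
                exact hbmono.monotone (by omega)
              exact le_trans h1 (hBgap _ (hbmem (c-1)) _ (hbmem c) (hbmono (by omega)))
          have hcard : ((Finset.range c).image b).card = c := by
            rw [Finset.card_image_of_injective _ hbmono.injective, Finset.card_range]
          have hsum : ∑ n ∈ (Finset.range c).image b, x n = ∑ i ∈ Finset.range c, x (b i) :=
            Finset.sum_image (fun i _ j _ h => hbmono.injective h)
          have h2 := hN ((Finset.range c).image b) (b c) hbc
          rw [hcard, hsum] at h2
          rw [Finset.sum_range_succ, ← add_assoc]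
          have hp : ((1:ℝ)/2)^(c+1) = (1/2)^c * (1/2) := pow_succ _ _
          rw [hp] at h2 ⊢
          push_cast
          linarith
      have hδhalf : ∀ c : ℕ, δ * (1 - (1/2:ℝ)^c) ≤ δ := by
        intro c
        have h1 : (0:ℝ) ≤ (1/2:ℝ)^c := by positivity
        nlinarith
      have hyne : ∀ c : ℕ, z + ∑ i ∈ Finset.range (c+1), x (b i) ≠ 0 := by
        intro c h0
        have h1 := hinv (c+1)
        rw [h0, norm_zero] at h1
        have h2 := hδhalf (c+1)
        have h3 : (0:ℝ) ≤ ‖z‖ := norm_nonneg z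
        push_cast at h1
        linarith
      have hfex : ∀ c : ℕ, ∃ f : StrongDual ℝ X, ‖f‖ = 1 ∧
          f (z + ∑ i ∈ Finset.range (c+1), x (b i)) =
            ‖z + ∑ i ∈ Finset.range (c+1), x (b i)‖ :=
        fun c => exists_dual_vector ℝ _ (norm_ne_zero_iff.2 (hyne c))
      choose f hf1 hf2 using hfex
      have hfval : ∀ c : ℕ,
          ‖z‖ + (c+1 : ℝ) - δ ≤ f c (z + ∑ i ∈ Finset.range (c+1), x (b i)) := by
        intro c
        rw [hf2 c]
        have h1 := hinv (c+1)
        have h2 := hδhalf (c+1)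
        push_cast at h1
        linarith
      have hfx_le : ∀ c i, f c (x (b i)) ≤ 1 := by
        intro c i
        calc f c (x (b i)) ≤ ‖f c (x (b i))‖ := le_abs_self _
          _ ≤ ‖f c‖ * ‖x (b i)‖ := (f c).le_opNorm _
          _ ≤ 1 * 1 := by rw [hf1]; exact mul_le_mul_of_nonneg_left (hx _) zero_le_one
          _ = 1 := mul_one 1
      have hfz_le : ∀ c, f c z ≤ ‖z‖ := by
        intro c
        calc f c z ≤ ‖f c z‖ := le_abs_self _
          _ ≤ ‖f c‖ * ‖z‖ := (f c).le_opNorm _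
          _ = ‖z‖ := by rw [hf1, one_mul]
      have hsplitf : ∀ c, f c (z + ∑ i ∈ Finset.range (c+1), x (b i)) =
          f c z + ∑ i ∈ Finset.range (c+1), f c (x (b i)) := by
        intro c; rw [map_add, map_sum]
      have hfz : ∀ c, ‖z‖ - δ ≤ f c z := by
        intro c
        have h1 := hfval c
        rw [hsplitf c] at h1
        have h2 : ∑ i ∈ Finset.range (c+1), f c (x (b i)) ≤ ((c:ℝ)+1) := by
          calc ∑ i ∈ Finset.range (c+1), f c (x (b i))
              ≤ ∑ _i ∈ Finset.range (c+1), (1:ℝ) := Finset.sum_le_sum (fun i _ => hfx_le c i)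
            _ = ((c:ℝ)+1) := by simp
        linarith
      have hfxge : ∀ c i, i < c + 1 → 1 - δ ≤ f c (x (b i)) := by
        intro c i hic
        have h1 := hfval c
        rw [hsplitf c] at h1
        have hmem : i ∈ Finset.range (c+1) := Finset.mem_range.2 hic
        have hs2 : ∑ j ∈ Finset.range (c+1), f c (x (b j)) =
            f c (x (b i)) + ∑ j ∈ (Finset.range (c+1)).erase i, f c (x (b j)) :=
          (Finset.add_sum_erase _ _ hmem).symm
        have h2 : ∑ j ∈ (Finset.range (c+1)).erase i, f c (x (b j)) ≤ (c : ℝ) := by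
          calc ∑ j ∈ (Finset.range (c+1)).erase i, f c (x (b j))
              ≤ ∑ _j ∈ (Finset.range (c+1)).erase i, (1:ℝ) :=
                Finset.sum_le_sum (fun j _ => hfx_le c j)
            _ = (((Finset.range (c+1)).erase i).card : ℝ) := by simp
            _ = (c : ℝ) := by rw [Finset.card_erase_of_mem hmem, Finset.card_range]; simp
        have h3 := hfz_le c
        rw [hs2] at h1
        linarith
      set V : Ultrafilter ℕ := Ultrafilter.of Filter.atTop with hV
      have hV_le : (V : Filter ℕ) ≤ Filter.atTop := Ultrafilter.of_le _
      have hmemball : ∀ c, StrongDual.toWeakDual (f c) ∈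
          (WeakDual.toStrongDual ⁻¹' Metric.closedBall 0 1 : Set (WeakDual ℝ X)) := by
        intro c
        simp only [Set.mem_preimage, Metric.mem_closedBall, dist_zero_right]
        show ‖f c‖ ≤ 1
        rw [hf1]
      obtain ⟨g, hgball, hgle⟩ :=
        (WeakDual.isCompact_closedBall (𝕜 := ℝ) (E := X) 0 1).ultrafilter_le_nhds
          (V.map (fun c => StrongDual.toWeakDual (f c)))
          (le_principal_iff.2 (by
            rw [Ultrafilter.coe_map, Filter.mem_map]
            exact Filter.Eventually.of_forall hmemball))
      have hgtend : Filter.Tendsto (fun c => StrongDual.toWeakDual (f c)) (V : Filter ℕ) (nhds g) := by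
        rwa [Ultrafilter.coe_map] at hgle
      set g' : StrongDual ℝ X := WeakDual.toStrongDual g with hg'
      have hg'norm : ‖g'‖ ≤ 1 := by
        simpa [dist_zero_right] using hgball
      have hgeval : ∀ v : X, Filter.Tendsto (fun c => f c v) (V : Filter ℕ) (nhds (g v)) :=
        fun v => ((WeakDual.eval_continuous v).tendsto g).comp hgtend
      have hgz : ‖z‖ - δ ≤ g z := ge_of_tendsto' (hgeval z) hfz
      have hgx : ∀ m ∈ B, 1 - δ ≤ g (x m) := by
        intro m hm
        have hcount : b (Nat.count (· ∈ B) m) = m := Nat.nth_count hm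
        set i := Nat.count (· ∈ B) m with hi
        refine ge_of_tendsto (hgeval (x m)) ?_
        have hallc : ∀ c ≥ i, 1 - δ ≤ f c (x m) := by
          intro c hc
          have := hfxge c i (by omega)
          rwa [hcount] at this
        exact (Filter.eventually_atTop.2 ⟨i, hallc⟩).filter_mono hV_le
      have hug : 1 - δ ≤ u g' := by
        refine ge_of_tendsto (heval g') ?_
        have hev : ∀ᶠ n in (U : Filter ℕ), n ∈ B := hBU
        exact hev.mono (fun n hn => hgx n hn)
      have hfinal : 1 + ‖z‖ - 2*δ ≤ (ι z + u) g' := by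
        have he : (ι z + u) g' = g' z + u g' := by
          rw [ContinuousLinearMap.add_apply, hι, dual_def]
        rw [he]
        have hgz' : ‖z‖ - δ ≤ g' z := hgz
        linarith
      calc 1 + ‖z‖ - 2*δ ≤ (ι z + u) g' := hfinal
        _ ≤ ‖ι z + u‖ * ‖g'‖ := le_trans (le_abs_self _) ((ι z + u).le_opNorm g')
        _ ≤ ‖ι z + u‖ * 1 := mul_le_mul_of_nonneg_left hg'norm (norm_nonneg (ι z + u))
        _ = ‖ι z + u‖ := mul_one _
    have hlower' : 1 + ‖z‖ ≤ ‖ι z + u‖ := by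
      refine le_of_forall_pos_le_add (fun ε hε => ?_)
      have h1 : 0 < min (ε/2) (1/2 : ℝ) := lt_min (by linarith) (by norm_num)
      have h2 : min (ε/2) (1/2 : ℝ) < 1 := lt_of_le_of_lt (min_le_right _ _) (by norm_num)
      have h3 := hlower _ h1 h2
      have h4 : min (ε/2) (1/2 : ℝ) ≤ ε/2 := min_le_left _ _
      linarith
    linarith [hupper, hlower']
  refine ⟨?_, hmain⟩
  have h0 := hmain 0
  rw [map_zero, zero_add, norm_zero, add_zero] at h0
  exact h0
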